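/- Let R be a Noetherian ring of prime characteristic p > 0 and let x_1,…,x_k be a sequence of elements of R that is a regular sequence in every order. If the ideal (x_1,…,x_k) is Frobenius closed, then the ideal (x_1^{n_1},…,x_k^{n_k}) is Frobenius closed for all integers n_1,…,n_k ≥ 1. -/

import Mathlib

/-!
Preliminary definitions for formalizing statements about `F`-injectivity and Frobenius
closure of ideals in Noetherian rings of prime characteristic `p > 0`.
-/

open CategoryTheory IsLocalRing

noncomputable section

/-- `F_* R`: the ring `R` viewed as a module over itself via the Frobenius
endomorphism `x ↦ x ^ p`. -/
def FrobeniusRestriction (p : ℕ) (R : Type) : Type := R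

instance (p : ℕ) (R : Type) [CommRing R] : AddCommGroup (FrobeniusRestriction p R) :=
  inferInstanceAs (AddCommGroup R)

instance (p : ℕ) [Fact p.Prime] (R : Type) [CommRing R] [CharP R p] :
    Module R (FrobeniusRestriction p R) :=
  Module.compHom R (frobenius R p)

/-- The Frobenius `R → F_* R`, `x ↦ x ^ p`, as a map of `R`-modules. -/
def frobeniusLinearMap (p : ℕ) [Fact p.Prime] (R : Type) [CommRing R] [CharP R p] :
    R →ₗ[R] FrobeniusRestriction p R where
  toFun x := x ^ p
  map_add' x y := add_pow_char x y p
  map_smul' r x := by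
    show (r * x) ^ p = frobenius R p r * x ^ p
    rw [frobenius_def, mul_pow]

/-- The natural Frobenius action on the local cohomology module `H^i_I(R)` is injective.
This is formalized as the injectivity of the map `H^i_I(R) → H^i_I(F_* R)` induced by the
Frobenius `R → F_* R`; it differs from the classical Frobenius action on `H^i_I(R)` only by
composition with the canonical isomorphism `H^i_I(F_* R) ≅ F_* H^i_{I^{[p]}}(R) ≅ F_* H^i_I(R)`,
hence its injectivity is equivalent to the injectivity of the classical Frobenius action. -/
def FrobeniusActionInjective (p : ℕ) [Fact p.Prime] (R : Type) [CommRing R] [CharP R p]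
    (I : Ideal R) (i : ℕ) : Prop :=
  Function.Injective
    ((localCohomology I i).map (ModuleCat.ofHom (frobeniusLinearMap p R)))

/-- A local ring of prime characteristic `p` is `F`-injective if the natural Frobenius
action on `H^i_m(R)` is injective for all `i ≥ 0`. -/
def IsFInjective (p : ℕ) [Fact p.Prime] (R : Type) [CommRing R] [IsLocalRing R] [CharP R p] :
    Prop :=
  ∀ i : ℕ, FrobeniusActionInjective p R (maximalIdeal R) i

/-- `R` is `F`-pure: the Frobenius `R → F_* R` is a pure map of `R`-modules, i.e. it stays
injective after tensoring with an arbitrary `R`-module `M`. -/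
def IsFPure (p : ℕ) [Fact p.Prime] (R : Type) [CommRing R] [CharP R p] : Prop :=
  ∀ (M : Type) [AddCommGroup M] [Module R M],
    Function.Injective (TensorProduct.map (frobeniusLinearMap p R) (LinearMap.id (M := M)))

/-- `R` is `F`-finite: `R` is a finitely generated module over itself via the Frobenius
endomorphism. -/
def IsFFinite (p : ℕ) [Fact p.Prime] (R : Type) [CommRing R] [CharP R p] : Prop :=
  RingHom.Finite (frobenius R p)

/-- The ideal `I^{[q]}` generated by the `q`-th powers of the elements of `I`. -/
def idealFrobPow {R : Type} [CommRing R] (I : Ideal R) (q : ℕ) : Ideal R :=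
  Ideal.span ((fun a => a ^ q) '' (I : Set R))

/-- The Frobenius closure `I^F = {u : u ^ (p ^ e) ∈ I^{[p ^ e]} for some e ≥ 0}` of an ideal `I`,
as a subset of `R` (in characteristic `p > 0` this subset is itself an ideal). -/
def frobeniusClosure (p : ℕ) {R : Type} [CommRing R] (I : Ideal R) : Set R :=
  {u | ∃ e : ℕ, u ^ p ^ e ∈ idealFrobPow I (p ^ e)}

/-- An ideal `I` is Frobenius closed if `I^F = I`, equivalently `I^F ⊆ I`. -/
def IsFrobeniusClosed (p : ℕ) {R : Type} [CommRing R] (I : Ideal R) : Prop :=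
  frobeniusClosure p I ⊆ I

/-- The length `ℓ_R(M)` of a module, expressed as the Krull dimension of its lattice of
submodules (the supremum of the lengths of chains of submodules). -/
def moduleLength (R M : Type) [CommRing R] [AddCommGroup M] [Module R M] : WithBot ℕ∞ :=
  Order.krullDim (Submodule R M)

/-- A system of parameters of a local ring `R`: if `R` has Krull dimension `d`, it is a
sequence of `d` elements of the maximal ideal generating an `m`-primary ideal. -/
def IsSystemOfParameters (R : Type) [CommRing R] [IsLocalRing R] {d : ℕ}
    (x : Fin d → R) : Prop :=
  ringKrullDim R = d ∧ (∀ i, x i ∈ maximalIdeal R) ∧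
    (Ideal.span (Set.range x)).radical = maximalIdeal R

/-- The ideal `(x_1, …, x_j)` generated by the first `j` elements of a finite sequence. -/
def firstIdeal {R : Type} [CommRing R] {s : ℕ} (x : Fin s → R) (j : ℕ) : Ideal R :=
  Ideal.span {y | ∃ i : Fin s, (i : ℕ) < j ∧ x i = y}

/-- `x_1, …, x_s` is a filter regular sequence on `M`: each `x_i` lies in the maximal ideal
and lies outside every associated prime of `M/(x_1,…,x_{i-1})M` other than the maximal ideal. -/
def IsFilterRegular {R : Type} [CommRing R] [IsLocalRing R] (M : Type) [AddCommGroup M]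
    [Module R M] {s : ℕ} (x : Fin s → R) : Prop :=
  (∀ i, x i ∈ maximalIdeal R) ∧
    ∀ i : Fin s, ∀ P ∈ associatedPrimes R (M ⧸ (firstIdeal x (i : ℕ) • ⊤ : Submodule R M)),
      P ≠ maximalIdeal R → x i ∉ P

/-- The `i`-th local cohomology `H^i_m(M)` of the `R`-module `M` with support in the
maximal ideal. -/
def Hm (R : Type) [CommRing R] [IsLocalRing R] (M : Type) [AddCommGroup M] [Module R M]
    (i : ℕ) : ModuleCat R :=
  (localCohomology (maximalIdeal R) i).obj (ModuleCat.of R M)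

/-- The finiteness dimension `f_m(M) = inf { i : H^i_m(M) is not finitely generated }`,
an element of `ℕ∞` (the infimum of the empty set being `∞`). -/
def finitenessDimension (R : Type) [CommRing R] [IsLocalRing R] (M : Type) [AddCommGroup M]
    [Module R M] : ℕ∞ :=
  sInf ((↑) '' {i : ℕ | ¬ Module.Finite R (Hm R M i)})

/-- A sequence `x_1,…,x_s` is a standard sequence of `M` if it is a filter regular sequence
on `M` with `s ≤ f_m(M)` and `(x_1,…,x_s) · H^i_m(M/(x_1,…,x_j)M) = 0` for all `i + j < s`.
This definition records only the annihilation condition; the filter regularity and the bound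
`s ≤ f_m(M)` are carried separately as hypotheses. -/
def IsStandardSequence (R : Type) [CommRing R] [IsLocalRing R] (M : Type) [AddCommGroup M]
    [Module R M] {s : ℕ} (x : Fin s → R) : Prop :=
  ∀ i j : ℕ, i + j < s → ∀ r ∈ Ideal.span (Set.range x),
    ∀ y : Hm R (M ⧸ (firstIdeal x j • ⊤ : Submodule R M)) i, r • y = 0

/-- The limit closure `(x_1,…,x_t)^lim = ⋃_{n>0} ((x_1^{n+1},…,x_t^{n+1}) :_R (x_1⋯x_t)^n)`
of a sequence, as a subset of `R` (this subset is itself an ideal); for `t = 0` it is `(0)`. -/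
def limitClosure {R : Type} [CommRing R] {t : ℕ} (x : Fin t → R) : Set R :=
  {a | ∃ n : ℕ, 0 < n ∧ a * (∏ i, x i) ^ n ∈ Ideal.span (Set.range fun i => x i ^ (n + 1))}

instance (p : ℕ) [Fact p.Prime] (R : Type) [CommRing R] [CharP R p] (S : Submonoid R)
    [Nontrivial (Localization S)] : CharP (Localization S) p :=
  (CharP.charP_iff_prime_eq_zero Fact.out).mpr (by
    rw [← map_natCast (algebraMap R (Localization S)) p, CharP.cast_eq_zero, map_zero])


section Helpers

variable {R : Type} [CommRing R]

lemma mem_span_image_finset {ι : Type} [DecidableEq ι] {S : Finset ι} {f : ι → R} {z : R} :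
    z ∈ Ideal.span (f '' ↑S) ↔ ∃ c : ι → R, z = ∑ i ∈ S, c i * f i := by
  constructor
  · intro hz
    induction S using Finset.induction_on generalizing z with
    | empty =>
        simp only [Finset.coe_empty, Set.image_empty, Ideal.span_empty,
          Ideal.mem_bot] at hz
        exact ⟨0, by simp [hz]⟩
    | @insert a S' ha ih =>
        rw [Finset.coe_insert, Set.image_insert_eq, Ideal.span_insert] at hz
        obtain ⟨u, hu, v, hv, huv⟩ := Submodule.mem_sup.mp hz
        obtain ⟨r, hr⟩ := Ideal.mem_span_singleton'.mp hu
        obtain ⟨c, hc⟩ := ih hv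
        refine ⟨Function.update c a r, ?_⟩
        rw [Finset.sum_insert ha, Function.update_self, ← huv, ← hr, hc]
        congr 1
        exact Finset.sum_congr rfl fun i hi =>
          by rw [Function.update_of_ne (fun h : i = a => ha (h ▸ hi))]
  · rintro ⟨c, rfl⟩
    exact Ideal.sum_mem _ fun i hi =>
      Ideal.mul_mem_left _ _ (Ideal.subset_span ⟨i, by simpa using hi, rfl⟩)

lemma mul_mem_of_span {s : Set R} {I : Ideal R} {a y : R} (ha : a ∈ Ideal.span s)
    (h : ∀ b ∈ s, b * y ∈ I) : a * y ∈ I := by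
  induction ha using Submodule.span_induction with
  | mem b hb => exact h b hb
  | zero => simp
  | add b c _ _ hb hc => rw [add_mul]; exact add_mem hb hc
  | smul r b _ hb => rw [smul_eq_mul, mul_assoc]; exact Ideal.mul_mem_left _ _ hb

lemma cancel_pow {I : Ideal R} {w : R} (hw : ∀ z, z * w ∈ I → z ∈ I) :
    ∀ (t : ℕ) (z : R), z * w ^ t ∈ I → z ∈ I := by
  intro t
  induction t with
  | zero => intro z h; simpa using h
  | succ t ih =>
      intro z h
      refine hw z (ih (z * w) ?_)
      rwa [mul_assoc, ← pow_succ']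

lemma smulreg_quot {I : Ideal R} {r : R}
    (h : IsSMulRegular (R ⧸ (I • ⊤ : Submodule R R)) r) {z : R} (hz : z * r ∈ I) : z ∈ I := by
  have hIT : (I • ⊤ : Submodule R R) = I := by rw [Ideal.smul_eq_mul, Ideal.mul_top]
  have h0 : r • (Submodule.Quotient.mk z : R ⧸ (I • ⊤ : Submodule R R)) = r • (0 : _) := by
    rw [smul_zero, ← Submodule.Quotient.mk_smul, Submodule.Quotient.mk_eq_zero, hIT,
      smul_eq_mul]
    rwa [mul_comm] at hz
  have := h h0
  rwa [Submodule.Quotient.mk_eq_zero, hIT] at this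

end Helpers
section Part2

variable {R : Type} [CommRing R]

lemma frob_span (p : ℕ) [Fact p.Prime] [CharP R p] {ι : Type} (y : ι → R) (e : ℕ) :
    idealFrobPow (Ideal.span (Set.range y)) (p ^ e) =
      Ideal.span (Set.range fun i => y i ^ p ^ e) := by
  apply le_antisymm
  · rw [idealFrobPow, Ideal.span_le]
    rintro _ ⟨a, ha, rfl⟩
    simp only [SetLike.mem_coe] at ha ⊢
    induction ha using Submodule.span_induction with
    | mem b hb =>
        obtain ⟨i, rfl⟩ := hb
        exact Ideal.subset_span ⟨i, rfl⟩
    | zero =>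
        rw [zero_pow (pow_ne_zero e (Fact.out : p.Prime).ne_zero)]
        exact zero_mem _
    | add b c _ _ hb hc => rw [add_pow_char_pow]; exact add_mem hb hc
    | smul r b _ hb =>
        rw [smul_eq_mul, mul_pow]
        exact Ideal.mul_mem_left _ _ hb
  · rw [Ideal.span_le]
    rintro _ ⟨i, rfl⟩
    exact Ideal.subset_span ⟨y i, Ideal.subset_span ⟨i, rfl⟩, rfl⟩

variable {k : ℕ} (x : Fin k → R)
  (hreg : ∀ l : List R, l.Perm (List.ofFn x) → RingTheory.Sequence.IsRegular R l)

include hreg in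
lemma base_nzd (S : Finset (Fin k)) (i₀ : Fin k) (hi₀ : i₀ ∉ S) {z : R}
    (hz : z * x i₀ ∈ Ideal.span (x '' ↑S)) : z ∈ Ideal.span (x '' ↑S) := by
  classical
  set t : Multiset (Fin k) := Finset.univ.val - (i₀ ::ₘ S.val) with ht
  have hle : (i₀ ::ₘ S.val) ≤ Finset.univ.val := by
    rw [← Finset.insert_val_of_notMem hi₀]
    exact Finset.val_le_iff.mpr (Finset.subset_univ _)
  have hperm : (S.toList.map x ++ x i₀ :: t.toList.map x).Perm (List.ofFn x) := by
    rw [← Multiset.coe_eq_coe]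
    have h1 : ((List.ofFn x : List R) : Multiset R) = Multiset.map x Finset.univ.val := by
      rw [List.ofFn_eq_map, Fin.univ_def]
      rfl
    rw [h1, ← add_tsub_cancel_of_le hle, ← ht]
    rw [← Multiset.coe_add, ← Multiset.cons_coe, Multiset.map_add, Multiset.map_cons,
      ← Multiset.map_coe, ← Multiset.map_coe, Finset.coe_toList,
      Multiset.coe_toList, Multiset.cons_add, Multiset.add_cons]
  have hrl := (hreg _ hperm).toIsWeaklyRegular
  rw [show (S.toList.map x ++ x i₀ :: t.toList.map x)
        = (S.toList.map x) ++ (x i₀ :: t.toList.map x) from rfl,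
    RingTheory.Sequence.isWeaklyRegular_append_iff,
    RingTheory.Sequence.isWeaklyRegular_cons_iff] at hrl
  have hsmul := hrl.2.1
  have hI : Ideal.ofList (S.toList.map x) = Ideal.span (x '' ↑S) := by
    show Ideal.span _ = _
    congr 1
    ext r
    simp [List.mem_map, Finset.mem_toList, eq_comm]
  rw [hI] at hsmul
  exact smulreg_quot hsmul hz

end Part2

section Part3

variable {R : Type} [CommRing R] {k : ℕ} (x : Fin k → R)
  (hreg : ∀ l : List R, l.Perm (List.ofFn x) → RingTheory.Sequence.IsRegular R l)

include hreg in
lemma nzd_pow : ∀ (N : ℕ) (S : Finset (Fin k)) (m : Fin k → ℕ), (∀ i ∈ S, 1 ≤ m i) →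
    (∑ i ∈ S, m i) ≤ N → ∀ i₀ ∉ S, ∀ z : R,
    z * x i₀ ∈ Ideal.span ((fun i => x i ^ m i) '' ↑S) →
    z ∈ Ideal.span ((fun i => x i ^ m i) '' ↑S) := by
  intro N
  induction N using Nat.strong_induction_on with
  | _ N IH =>
  intro S m hm hsum i₀ hi₀ z hz
  by_cases hall : ∀ i ∈ S, m i = 1
  · have himg : (fun i => x i ^ m i) '' ↑S = x '' ↑S :=
      Set.image_congr fun i hi => by rw [hall i hi, pow_one]
    rw [himg] at hz ⊢
    exact base_nzd x hreg S i₀ hi₀ hz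
  · push_neg at hall
    obtain ⟨j, hjS, hj1⟩ := hall
    have hj2 : 2 ≤ m j := Nat.lt_of_le_of_ne (hm j hjS) (Ne.symm hj1)
    have hji₀ : j ≠ i₀ := fun h => hi₀ (h ▸ hjS)
    obtain ⟨c, hc⟩ := mem_span_image_finset.mp hz
    have hsplit : z * x i₀ = c j * x j ^ m j + ∑ i ∈ S.erase j, c i * x i ^ m i := by
      rw [hc, ← Finset.add_sum_erase _ _ hjS]
    set m' := Function.update m i₀ 1 with hm'
    set S' := insert i₀ (S.erase j) with hS'
    have hjS' : j ∉ S' := by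
      simp only [hS', Finset.mem_insert, Finset.mem_erase]
      rintro (h | ⟨h, -⟩)
      · exact hji₀ h
      · exact h rfl
    have hi₀e : i₀ ∉ S.erase j := fun h => hi₀ (Finset.mem_of_mem_erase h)
    have hsum_erase : m j + ∑ i ∈ S.erase j, m i = ∑ i ∈ S, m i :=
      Finset.add_sum_erase _ _ hjS
    have hsumS' : ∑ i ∈ S', m' i = 1 + ∑ i ∈ S.erase j, m i := by
      rw [hS', Finset.sum_insert hi₀e, hm', Function.update_self]
      congr 1
      exact Finset.sum_congr rfl fun i hi =>
        Function.update_of_ne (fun h : i = i₀ => hi₀e (h ▸ hi)) _ _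
    have hlt1 : 1 + ∑ i ∈ S.erase j, m i < N :=
      lt_of_lt_of_le (by omega) hsum
    have hlt2 : ∑ i ∈ S.erase j, m i < N := by omega
    -- c j * x j ^ m j lies in the span over S' with exponents m'
    have h1 : c j * x j ^ m j ∈ Ideal.span ((fun i => x i ^ m' i) '' ↑S') := by
      have heq : c j * x j ^ m j = z * x i₀ - ∑ i ∈ S.erase j, c i * x i ^ m i := by
        rw [hsplit]; ring
      rw [heq]
      refine sub_mem ?_ (Ideal.sum_mem _ fun i hi => ?_)
      · refine Ideal.mul_mem_left _ z (Ideal.subset_span ⟨i₀, by simp [hS'], ?_⟩)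
        simp [hm']
      · have hii₀ : i ≠ i₀ := fun h => hi₀e (h ▸ hi)
        refine Ideal.mul_mem_left _ _ (Ideal.subset_span
          ⟨i, Finset.mem_coe.mpr (by rw [hS']; exact Finset.mem_insert_of_mem hi), ?_⟩)
        simp [hm', Function.update_of_ne hii₀]
    have hm'S' : ∀ i ∈ S', 1 ≤ m' i := by
      intro i hi
      rcases eq_or_ne i i₀ with h | h
      · rw [h, hm', Function.update_self]
      · rw [hm', Function.update_of_ne h]
        exact hm i (Finset.mem_of_mem_erase (by
          rcases Finset.mem_insert.mp (hS' ▸ hi) with h' | h'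
          · exact absurd h' h
          · exact h'))
    have hnzd' : ∀ w : R, w * x j ∈ Ideal.span ((fun i => x i ^ m' i) '' ↑S') →
        w ∈ Ideal.span ((fun i => x i ^ m' i) '' ↑S') :=
      IH _ hlt1 S' m' hm'S' hsumS'.le j hjS'
    have hcj : c j ∈ Ideal.span ((fun i => x i ^ m' i) '' ↑S') :=
      cancel_pow hnzd' (m j) _ h1
    rw [hS', Finset.coe_insert, Set.image_insert_eq, Ideal.span_insert] at hcj
    obtain ⟨u, hu, v, hv, huv⟩ := Submodule.mem_sup.mp hcj
    obtain ⟨d, hd⟩ := Ideal.mem_span_singleton'.mp hu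
    have himg2 : (fun i => x i ^ m' i) '' ↑(S.erase j) = (fun i => x i ^ m i) '' ↑(S.erase j) :=
      Set.image_congr fun i hi => by
        rw [hm', Function.update_of_ne (fun h : i = i₀ => hi₀e (h ▸ hi))]
    rw [himg2] at hv
    have hcj' : c j = d * x i₀ + v := by
      rw [← huv, ← hd, hm', Function.update_self, pow_one]
    have key : (z - d * x j ^ m j) * x i₀
        = v * x j ^ m j + ∑ i ∈ S.erase j, c i * x i ^ m i := by
      have h2 : z * x i₀ = (d * x i₀ + v) * x j ^ m j + ∑ i ∈ S.erase j, c i * x i ^ m i := by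
        rw [← hcj']; exact hsplit
      linear_combination h2
    have hmem : (z - d * x j ^ m j) * x i₀ ∈
        Ideal.span ((fun i => x i ^ m i) '' ↑(S.erase j)) := by
      rw [key]
      refine add_mem (Ideal.mul_mem_right _ _ hv) (Ideal.sum_mem _ fun i hi =>
        Ideal.mul_mem_left _ _ (Ideal.subset_span ⟨i, Finset.mem_coe.mpr hi, rfl⟩))
    have h3 := IH _ hlt2 (S.erase j) m (fun i hi => hm i (Finset.mem_of_mem_erase hi))
      le_rfl i₀ hi₀e _ hmem
    have hspanle : Ideal.span ((fun i => x i ^ m i) '' ↑(S.erase j))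
        ≤ Ideal.span ((fun i => x i ^ m i) '' ↑S) :=
      Ideal.span_mono (Set.image_mono (by exact_mod_cast Finset.erase_subset _ _))
    have hz' : z = (z - d * x j ^ m j) + d * x j ^ m j := by ring
    rw [hz']
    exact add_mem (hspanle h3)
      (Ideal.mul_mem_left _ _ (Ideal.subset_span ⟨j, Finset.mem_coe.mpr hjS, rfl⟩))

end Part3

section Part4

variable {R : Type} [CommRing R] {k : ℕ} (x : Fin k → R)
  (hreg : ∀ l : List R, l.Perm (List.ofFn x) → RingTheory.Sequence.IsRegular R l)

include hreg in
lemma main_aux (p : ℕ) [Fact p.Prime] [CharP R p]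
    (hclosed : IsFrobeniusClosed p (Ideal.span (Set.range x))) :
    ∀ (N : ℕ) (n : Fin k → ℕ), (∀ i, 1 ≤ n i) → (∑ i, n i) ≤ N →
      IsFrobeniusClosed p (Ideal.span (Set.range fun i => x i ^ n i)) := by
  intro N
  induction N using Nat.strong_induction_on with
  | _ N IH =>
  intro n hn hsum
  by_cases hall : ∀ i, n i = 1
  · have hfun : (fun i => x i ^ n i) = x := funext fun i => by rw [hall i, pow_one]
    rw [hfun]
    exact hclosed
  · push_neg at hall
    obtain ⟨i₀, hi₀⟩ := hall
    have hn₀ : 2 ≤ n i₀ := Nat.lt_of_le_of_ne (hn i₀) (Ne.symm hi₀)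
    intro u hu
    obtain ⟨e, hue⟩ := hu
    rw [frob_span] at hue
    set q := p ^ e with hq
    have hq1 : 1 ≤ q := Nat.one_le_pow _ _ (Fact.out : p.Prime).pos
    -- Step A: u lies in the ideal with n i₀ lowered by one
    set n' := Function.update n i₀ (n i₀ - 1) with hn'
    have hn'le : ∀ i, n' i ≤ n i := by
      intro i
      rcases eq_or_ne i i₀ with h | h
      · rw [h, hn', Function.update_self]; omega
      · rw [hn', Function.update_of_ne h]
    have hn'1 : ∀ i, 1 ≤ n' i := by
      intro i
      rcases eq_or_ne i i₀ with h | h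
      · rw [h, hn', Function.update_self]; omega
      · rw [hn', Function.update_of_ne h]; exact hn i
    have hsum' : (∑ i, n' i) + 1 = ∑ i, n i := by
      rw [hn', Finset.sum_update_of_mem (Finset.mem_univ i₀),
        ← Finset.add_sum_erase _ n (Finset.mem_univ i₀), Finset.erase_eq]
      omega
    have hspan_le : Ideal.span (Set.range fun i => (x i ^ n i) ^ q)
        ≤ Ideal.span (Set.range fun i => (x i ^ n' i) ^ q) := by
      rw [Ideal.span_le]
      rintro _ ⟨i, rfl⟩
      have h5 : (x i ^ n i) ^ q = (x i ^ n' i) ^ q * x i ^ ((n i - n' i) * q) := by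
        rw [← pow_mul, ← pow_mul, ← pow_add, ← add_mul, Nat.add_sub_cancel' (hn'le i)]
      show (x i ^ n i) ^ q ∈ Ideal.span (Set.range fun i => (x i ^ n' i) ^ q)
      rw [h5]
      exact Ideal.mul_mem_right _ _ (Ideal.subset_span ⟨i, rfl⟩)
    have huI' : u ∈ Ideal.span (Set.range fun i => x i ^ n' i) := by
      refine IH (∑ i, n' i) (by omega) n' hn'1 le_rfl ⟨e, ?_⟩
      rw [frob_span, ← hq]
      exact hspan_le hue
    obtain ⟨c, hcu⟩ := (Submodule.mem_span_range_iff_exists_fun R).mp huI'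
    set B := ∑ i ∈ Finset.univ.erase i₀, c i * x i ^ n i with hB
    have hud : u = c i₀ * x i₀ ^ (n i₀ - 1) + B := by
      rw [← hcu, ← Finset.add_sum_erase _ _ (Finset.mem_univ i₀), hB]
      congr 1
      · rw [smul_eq_mul, hn', Function.update_self]
      · exact Finset.sum_congr rfl fun i hi => by
          rw [smul_eq_mul, hn', Function.update_of_ne (Finset.ne_of_mem_erase hi)]
    have hAq : (c i₀ * x i₀ ^ (n i₀ - 1)) ^ q
        ∈ Ideal.span (Set.range fun i => (x i ^ n i) ^ q) := by
      have hBq : B ^ q = ∑ i ∈ Finset.univ.erase i₀, (c i * x i ^ n i) ^ q := by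
        rw [hB, hq, sum_pow_char_pow]
      have heq : (c i₀ * x i₀ ^ (n i₀ - 1)) ^ q = u ^ q - B ^ q := by
        rw [hud, hq, add_pow_char_pow]; ring
      rw [heq, hBq]
      refine sub_mem hue (Ideal.sum_mem _ fun i _ => ?_)
      rw [mul_pow]
      exact Ideal.mul_mem_left _ _ (Ideal.subset_span ⟨i, rfl⟩)
    have hrange : (Set.range fun i => (x i ^ n i) ^ q)
        = insert ((x i₀ ^ n i₀) ^ q) ((fun i => (x i ^ n i) ^ q) '' ↑(Finset.univ.erase i₀)) := by
      rw [← Set.image_univ, ← Finset.coe_univ]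
      conv_lhs => rw [← Finset.insert_erase (Finset.mem_univ i₀)]
      rw [Finset.coe_insert, Set.image_insert_eq]
    rw [hrange, Ideal.span_insert] at hAq
    obtain ⟨w1, hw1, w2, hw2, hw⟩ := Submodule.mem_sup.mp hAq
    obtain ⟨d, hd⟩ := Ideal.mem_span_singleton'.mp hw1
    have himgq : (fun i => (x i ^ n i) ^ q) '' ↑(Finset.univ.erase i₀)
        = (fun i => x i ^ (n i * q)) '' ↑(Finset.univ.erase i₀) :=
      Set.image_congr fun i _ => by rw [← pow_mul]
    rw [himgq] at hw2
    have hkey : (c i₀ ^ q - d * x i₀ ^ q) * x i₀ ^ ((n i₀ - 1) * q)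
        ∈ Ideal.span ((fun i => x i ^ (n i * q)) '' ↑(Finset.univ.erase i₀)) := by
      have heq2 : (c i₀ ^ q - d * x i₀ ^ q) * x i₀ ^ ((n i₀ - 1) * q) = w2 := by
        have h1 : d * (x i₀ ^ n i₀) ^ q + w2 = (c i₀ * x i₀ ^ (n i₀ - 1)) ^ q := by
          rw [hd, hw]
        have h2 : (x i₀ ^ n i₀) ^ q = x i₀ ^ q * x i₀ ^ ((n i₀ - 1) * q) := by
          rw [← pow_mul, ← pow_add]
          congr 1
          conv_lhs => rw [show n i₀ = 1 + (n i₀ - 1) from by omega]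
          rw [add_mul, one_mul]
        have h3 : (c i₀ * x i₀ ^ (n i₀ - 1)) ^ q = c i₀ ^ q * x i₀ ^ ((n i₀ - 1) * q) := by
          rw [mul_pow, ← pow_mul]
        rw [h2, h3] at h1
        linear_combination -h1
      rw [heq2]
      exact hw2
    have hnzd := nzd_pow x hreg (∑ i ∈ Finset.univ.erase i₀, n i * q)
      (Finset.univ.erase i₀) (fun i => n i * q)
      (fun i _ => by have := hn i; exact Nat.one_le_iff_ne_zero.mpr (by positivity))
      le_rfl i₀ (Finset.notMem_erase _ _)
    have hcq := cancel_pow hnzd ((n i₀ - 1) * q) _ hkey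
    set n'' := Function.update n i₀ 1 with hn''
    have hrange'' : (Set.range fun i => (x i ^ n'' i) ^ q)
        = insert (x i₀ ^ q)
            ((fun i => x i ^ (n i * q)) '' ↑(Finset.univ.erase i₀)) := by
      rw [← Set.image_univ, ← Finset.coe_univ]
      conv_lhs => rw [← Finset.insert_erase (Finset.mem_univ i₀)]
      rw [Finset.coe_insert, Set.image_insert_eq]
      congr 1
      · show (x i₀ ^ n'' i₀) ^ q = x i₀ ^ q
        rw [hn'', Function.update_self, pow_one]
      · apply Set.image_congr
        intro i hi
        have hii : i ≠ i₀ := by simpa using hi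
        show (x i ^ n'' i) ^ q = x i ^ (n i * q)
        rw [hn'', Function.update_of_ne hii, ← pow_mul]
    have hsum'' : ∑ i, n'' i < N := by
      have h4 : (∑ i, n'' i) + (n i₀ - 1) = ∑ i, n i := by
        rw [hn'', Finset.sum_update_of_mem (Finset.mem_univ i₀),
          ← Finset.add_sum_erase _ n (Finset.mem_univ i₀), Finset.erase_eq]
        omega
      omega
    have haI : c i₀ ∈ Ideal.span (Set.range fun i => x i ^ n'' i) := by
      refine IH (∑ i, n'' i) hsum'' n'' (fun i => by
        rcases eq_or_ne i i₀ with h | h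
        · rw [h, hn'', Function.update_self]
        · rw [hn'', Function.update_of_ne h]; exact hn i) le_rfl ⟨e, ?_⟩
      rw [frob_span, ← hq, hrange'', Ideal.span_insert]
      refine Submodule.mem_sup.mpr ⟨d * x i₀ ^ q,
        Ideal.mem_span_singleton'.mpr ⟨d, rfl⟩, c i₀ ^ q - d * x i₀ ^ q, hcq, by ring⟩
    rw [hud]
    refine add_mem ?_ (Ideal.sum_mem _ fun i _ =>
      Ideal.mul_mem_left _ _ (Ideal.subset_span ⟨i, rfl⟩))
    refine mul_mem_of_span haI ?_
    rintro _ ⟨i, rfl⟩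
    show x i ^ n'' i * x i₀ ^ (n i₀ - 1) ∈ Ideal.span (Set.range fun i => x i ^ n i)
    rcases eq_or_ne i i₀ with h | h
    · subst h
      rw [hn'', Function.update_self, pow_one, ← pow_succ',
        show n i - 1 + 1 = n i from by omega]
      exact Ideal.subset_span ⟨i, rfl⟩
    · rw [hn'', Function.update_of_ne h]
      exact Ideal.mul_mem_right _ _ (Ideal.subset_span ⟨i, rfl⟩)

end Part4

/-- If `x_1, …, x_k` is a regular sequence in every order in a Noetherian ring
of prime characteristic `p > 0` and `(x_1, …, x_k)` is Frobenius closed, then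
`(x_1^{n_1}, …, x_k^{n_k})` is Frobenius closed for all `n_1, …, n_k ≥ 1`. -/
theorem statement_1 (p : ℕ) [Fact p.Prime] (R : Type) [CommRing R] [IsNoetherianRing R]
    [CharP R p] {k : ℕ} (x : Fin k → R)
    (hreg : ∀ l : List R, l.Perm (List.ofFn x) → RingTheory.Sequence.IsRegular R l)
    (hclosed : IsFrobeniusClosed p (Ideal.span (Set.range x)))
    (n : Fin k → ℕ) (hn : ∀ i, 1 ≤ n i) :
    IsFrobeniusClosed p (Ideal.span (Set.range fun i => x i ^ n i)) :=
  main_aux x hreg p hclosed (∑ i, n i) n hn le_rfl
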